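/- Suppose Ȳₖ ∈ ℝ (for k = 1,...,m) satisfy |S_k(n) - nμ - σB_k(n)| < Dψ(n) for Brownian motions B_k, where ψ(n) = o(√(n log log n)) and Ȳₖ = S_k(n)/n. If b = b(n) satisfies (b log log n)/n → 0, then (ab/(am-1))∑_{k=1}^m (Ȳₖ - μ)² → 0 almost surely as n → ∞, where a = n/b. -/

import Mathlib

open MeasureTheory ProbabilityTheory Filter Asymptotics
/-- Key lemma in the strong consistency proof of the RBM estimator: if the partial sums
`S_k(n)` satisfy a strong invariance principle `|S_k(n) - nμ - σB_k(n)| < Dψ(n)` with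
`ψ(n) = o(√(n log log n))`, the `B_k` satisfy the law-of-the-iterated-logarithm bound,
and `(b log log n)/n → 0`, then with `Ȳₖ = S_k(n)/n` and `a = n/b`,
`(ab/(am-1)) ∑ₖ (Ȳₖ - μ)² → 0` almost surely. -/
theorem rbm_mean_deviation_vanishes {Ω : Type*} [MeasureSpace Ω]
    [IsProbabilityMeasure (ℙ : Measure Ω)]
    (m : ℕ) (hm : 1 ≤ m) (μ σ : ℝ)
    (S B : Fin m → ℕ → Ω → ℝ) (D : Ω → ℝ) (ψ : ℕ → ℝ) (b : ℕ → ℕ)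
    (hb : ∀ n, 1 ≤ b n)
    (hψ : ψ =o[atTop] (fun n : ℕ => Real.sqrt (n * Real.log (Real.log n))))
    (hSIP : ∀ᵐ ω ∂ℙ, ∀ k, ∀ n : ℕ, |S k n ω - n * μ - σ * B k n ω| < D ω * ψ n)
    (hLIL : ∀ᵐ ω ∂ℙ, ∀ k, ∀ ε > (0 : ℝ), ∃ N, ∀ n ≥ N,
      |B k n ω| ≤ (1 + ε) * Real.sqrt (2 * n * Real.log (Real.log n)))
    (hbn : Tendsto (fun n => (b n : ℝ) * Real.log (Real.log n) / n) atTop (nhds 0)) :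
    ∀ᵐ ω ∂ℙ, Tendsto (fun n : ℕ =>
        (((n : ℝ) / (b n : ℝ)) * (b n : ℝ) / (((n : ℝ) / (b n : ℝ)) * m - 1)) *
          ∑ k, (S k n ω / n - μ) ^ 2) atTop (nhds 0) := by
  -- log log n → ∞
  have hLL : Tendsto (fun n : ℕ => Real.log (Real.log n)) atTop atTop :=
    Real.tendsto_log_atTop.comp (Real.tendsto_log_atTop.comp tendsto_natCast_atTop_atTop)
  filter_upwards [hSIP, hLIL] with ω hS hL
  set C : ℝ := 2 * Real.sqrt 2 * |σ| + |D ω| with hCdef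
  have hC : 0 ≤ C := by positivity
  -- squeeze between 0 and g
  apply squeeze_zero' (g := fun n : ℕ =>
      (2 * m * C ^ 2) * ((b n : ℝ) * Real.log (Real.log n) / n))
  · -- nonnegativity, eventually
    have h1 : ∀ᶠ n : ℕ in atTop, (1 : ℝ) ≤ Real.log (Real.log n) := hLL.eventually_ge_atTop 1
    have h2 : ∀ᶠ n : ℕ in atTop, (b n : ℝ) * Real.log (Real.log n) / n ≤ 1 / 2 :=
      hbn.eventually_le_const (by norm_num)
    filter_upwards [h1, h2, eventually_ge_atTop 1] with n hL1 hb2 hn1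
    have hnpos : (0 : ℝ) < n := by exact_mod_cast hn1
    have hbpos : (0 : ℝ) < b n := by exact_mod_cast hb n
    have hble : (b n : ℝ) ≤ n / 2 := by
      have : (b n : ℝ) / n ≤ (b n : ℝ) * Real.log (Real.log n) / n := by
        apply div_le_div_of_nonneg_right ?_ hnpos.le
        nlinarith
      have := this.trans hb2
      rw [div_le_div_iff₀ hnpos (by norm_num)] at this
      linarith
    have hden : (0 : ℝ) < (n : ℝ) / (b n : ℝ) * m - 1 := by
      have hm' : (1 : ℝ) ≤ m := by exact_mod_cast hm
      have : (2 : ℝ) ≤ (n : ℝ) / b n := by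
        rw [le_div_iff₀ hbpos]; linarith
      nlinarith
    positivity
  · -- the main bound, eventually
    have h1 : ∀ᶠ n : ℕ in atTop, (1 : ℝ) ≤ Real.log (Real.log n) := hLL.eventually_ge_atTop 1
    have h2 : ∀ᶠ n : ℕ in atTop, (b n : ℝ) * Real.log (Real.log n) / n ≤ 1 / 2 :=
      hbn.eventually_le_const (by norm_num)
    have h3 : ∀ᶠ n : ℕ in atTop,
        ‖ψ n‖ ≤ 1 * ‖Real.sqrt (n * Real.log (Real.log n))‖ :=
      isLittleO_iff.mp hψ one_pos
    have h4 : ∀ᶠ n : ℕ in atTop, ∀ k : Fin m,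
        |B k n ω| ≤ (1 + 1) * Real.sqrt (2 * n * Real.log (Real.log n)) := by
      rw [eventually_all]
      intro k
      obtain ⟨N, hN⟩ := hL k 1 one_pos
      exact eventually_atTop.2 ⟨N, hN⟩
    filter_upwards [h1, h2, h3, h4, eventually_ge_atTop 1] with n hL1 hb2 hψn hBn hn1
    have hnpos : (0 : ℝ) < n := by exact_mod_cast hn1
    have hbpos : (0 : ℝ) < b n := by exact_mod_cast hb n
    set L : ℝ := Real.log (Real.log n) with hLdef
    have hL0 : 0 ≤ L := by linarith
    have hnL : 0 ≤ (n : ℝ) * L := by positivity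
    -- bound each summand
    have key : ∀ k : Fin m, (S k n ω / n - μ) ^ 2 ≤ C ^ 2 * L / n := by
      intro k
      have hs : |S k n ω - n * μ| ≤ C * Real.sqrt ((n : ℝ) * L) := by
        have e1 : |S k n ω - n * μ - σ * B k n ω| ≤ |D ω| * Real.sqrt ((n : ℝ) * L) := by
          refine le_trans (hS k n).le ?_
          calc D ω * ψ n ≤ |D ω * ψ n| := le_abs_self _
            _ = |D ω| * |ψ n| := abs_mul _ _
            _ ≤ |D ω| * Real.sqrt ((n : ℝ) * L) := by
                apply mul_le_mul_of_nonneg_left ?_ (abs_nonneg _)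
                have := hψn
                rwa [one_mul, Real.norm_eq_abs, Real.norm_eq_abs,
                  abs_of_nonneg (Real.sqrt_nonneg _)] at this
        have e2 : |σ * B k n ω| ≤ 2 * Real.sqrt 2 * |σ| * Real.sqrt ((n : ℝ) * L) := by
          rw [abs_mul]
          have hB := hBn k
          have : Real.sqrt (2 * n * L) = Real.sqrt 2 * Real.sqrt ((n : ℝ) * L) := by
            rw [mul_assoc, Real.sqrt_mul (by norm_num : (0:ℝ) ≤ 2)]
          rw [this] at hB
          calc |σ| * |B k n ω| ≤ |σ| * ((1 + 1) * (Real.sqrt 2 * Real.sqrt ((n : ℝ) * L))) :=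
                mul_le_mul_of_nonneg_left hB (abs_nonneg _)
            _ = 2 * Real.sqrt 2 * |σ| * Real.sqrt ((n : ℝ) * L) := by ring
        calc |S k n ω - n * μ|
            = |(S k n ω - n * μ - σ * B k n ω) + σ * B k n ω| := by ring_nf
          _ ≤ |S k n ω - n * μ - σ * B k n ω| + |σ * B k n ω| := abs_add_le _ _
          _ ≤ |D ω| * Real.sqrt ((n : ℝ) * L)
              + 2 * Real.sqrt 2 * |σ| * Real.sqrt ((n : ℝ) * L) := add_le_add e1 e2
          _ = C * Real.sqrt ((n : ℝ) * L) := by rw [hCdef]; ring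
      have habs : |S k n ω / n - μ| ≤ C * Real.sqrt ((n : ℝ) * L) / n := by
        have : S k n ω / n - μ = (S k n ω - n * μ) / n := by field_simp
        rw [this, abs_div, abs_of_pos hnpos]
        exact div_le_div_of_nonneg_right hs hnpos.le
      calc (S k n ω / n - μ) ^ 2 = |S k n ω / n - μ| ^ 2 := (sq_abs _).symm
        _ ≤ (C * Real.sqrt ((n : ℝ) * L) / n) ^ 2 :=
            pow_le_pow_left₀ (abs_nonneg _) habs 2
        _ = C ^ 2 * ((n : ℝ) * L) / n ^ 2 := by
            rw [div_pow, mul_pow, Real.sq_sqrt hnL]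
        _ = C ^ 2 * L / n := by field_simp
    have hsum : ∑ k, (S k n ω / n - μ) ^ 2 ≤ m * (C ^ 2 * L / n) := by
      calc ∑ k, (S k n ω / n - μ) ^ 2 ≤ ∑ _k : Fin m, C ^ 2 * L / n :=
            Finset.sum_le_sum fun k _ => key k
        _ = m * (C ^ 2 * L / n) := by simp [Finset.sum_const, nsmul_eq_mul]
    have hsum0 : 0 ≤ ∑ k, (S k n ω / n - μ) ^ 2 :=
      Finset.sum_nonneg fun k _ => sq_nonneg _
    -- coefficient bound
    have hble : (b n : ℝ) ≤ n / 2 := by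
      have : (b n : ℝ) / n ≤ (b n : ℝ) * L / n := by
        apply div_le_div_of_nonneg_right ?_ hnpos.le
        nlinarith
      have := this.trans hb2
      rw [div_le_div_iff₀ hnpos (by norm_num)] at this
      linarith
    have hm' : (1 : ℝ) ≤ m := by exact_mod_cast hm
    have hden : (0 : ℝ) < (n : ℝ) / (b n : ℝ) * m - 1 := by
      have : (2 : ℝ) ≤ (n : ℝ) / b n := by rw [le_div_iff₀ hbpos]; linarith
      nlinarith
    have hcoef : (n : ℝ) / (b n : ℝ) * (b n : ℝ) / ((n : ℝ) / (b n : ℝ) * m - 1)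
        ≤ 2 * b n := by
      rw [div_le_iff₀ hden]
      have he : (n : ℝ) / (b n : ℝ) * (b n : ℝ) = n := by field_simp
      rw [he]
      have : (2 : ℝ) * b n * ((n : ℝ) / (b n : ℝ) * m - 1)
          = 2 * ((n : ℝ) * m) - 2 * b n := by field_simp
      rw [this]
      nlinarith
    have hcoef0 : 0 ≤ (n : ℝ) / (b n : ℝ) * (b n : ℝ) / ((n : ℝ) / (b n : ℝ) * m - 1) := by
      positivity
    calc (n : ℝ) / (b n : ℝ) * (b n : ℝ) / ((n : ℝ) / (b n : ℝ) * m - 1)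
          * ∑ k, (S k n ω / n - μ) ^ 2
        ≤ 2 * b n * (m * (C ^ 2 * L / n)) := by
          apply mul_le_mul hcoef hsum hsum0 (by positivity)
      _ = 2 * m * C ^ 2 * ((b n : ℝ) * L / n) := by field_simp
  · simpa using hbn.const_mul (2 * m * C ^ 2)
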